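/- Let 𝒢(s) = Ĝ(−s), where Ĝ is the Legendre transform of G(ε) = ∫₀^∞ ξ² (max(α − ε√(1+ξ²), 0))^{σ+1} dξ with σ ∈ (0,3/2), α > 0 (and G(ε) = +∞ for ε ≤ 0). Then 𝒢(0) = 0, 𝒢 is differentiable at 0 from the right with 𝒢'(0) = −α, 𝒢'(s) ∈ (−α, 0) for s > 0, lim_{s→∞} 𝒢'(s) = 0, 𝒢(s) < 0 for s > 0, and lim_{s→∞} 𝒢(s) = −∞. -/

import Mathlib

/-- `G(ε) = ∫₀^∞ ξ² (max(α − ε√(1+ξ²), 0))^{σ+1} dξ` (for `ε > 0`). -/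
noncomputable def Gfun (σ α ε : ℝ) : ℝ :=
  ∫ ξ in Set.Ioi (0:ℝ), ξ ^ 2 * (max (α - ε * Real.sqrt (1 + ξ ^ 2)) 0) ^ (σ + 1)

/-- Legendre transform of `G`, where `G = +∞` on `(−∞,0]` so the supremum is
taken over `ε > 0`. -/
noncomputable def GhatFun (σ α u : ℝ) : ℝ :=
  sSup {y : ℝ | ∃ ε : ℝ, 0 < ε ∧ y = ε * u - Gfun σ α ε}

/-- `𝒢(s) = Ĝ(−s)`. -/
noncomputable def calG (σ α s : ℝ) : ℝ := GhatFun σ α (-s)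

noncomputable def gF (σ α ε ξ : ℝ) : ℝ :=
  ξ ^ 2 * Real.sqrt (1 + ξ ^ 2) * (max (α - ε * Real.sqrt (1 + ξ ^ 2)) 0) ^ σ

noncomputable def Hfun (σ α ε : ℝ) : ℝ := (σ + 1) * ∫ ξ in Set.Ioi (0:ℝ), gF σ α ε ξ

open Real MeasureTheory Set Filter



lemma maxpow_hasDerivAt {q : ℝ} (hq : 1 < q) (x : ℝ) :
    HasDerivAt (fun x : ℝ => max x 0 ^ q) (q * max x 0 ^ (q - 1)) x := by
  rcases lt_trichotomy x 0 with hx | hx | hx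
  · have h0 : max x 0 = 0 := max_eq_right hx.le
    have h : (fun x : ℝ => max x 0 ^ q) =ᶠ[nhds x] fun _ => (0:ℝ) ^ q := by
      filter_upwards [Iio_mem_nhds hx] with y hy
      rw [max_eq_right (le_of_lt hy)]
    rw [h0, Real.zero_rpow (by linarith : q - 1 ≠ 0), mul_zero]
    exact (hasDerivAt_const x ((0:ℝ)^q)).congr_of_eventuallyEq h
  · subst hx
    have h0 : max (0:ℝ) 0 = 0 := max_self 0
    rw [h0, Real.zero_rpow (by linarith : q - 1 ≠ 0), mul_zero]
    rw [hasDerivAt_iff_tendsto_slope]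
    have hb : ∀ y : ℝ, |slope (fun x : ℝ => max x 0 ^ q) 0 y| ≤ |y| ^ (q - 1) := by
      intro y
      rcases le_or_gt y 0 with hy | hy
      · have : slope (fun x : ℝ => max x 0 ^ q) 0 y = 0 := by
          simp [slope, max_eq_right hy, max_self, Real.zero_rpow (by linarith : q ≠ 0)]
        rw [this, abs_zero]
        positivity
      · have : slope (fun x : ℝ => max x 0 ^ q) 0 y = y ^ (q - 1) := by
          simp only [slope, max_eq_left hy.le, max_self, Real.zero_rpow (by linarith : q ≠ 0),
            vsub_eq_sub, sub_zero, smul_eq_mul]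
          rw [← Real.rpow_neg_one y, ← Real.rpow_add hy]
          ring_nf
        rw [this, abs_of_nonneg (Real.rpow_nonneg hy.le _), abs_of_pos hy]
    have hten : Filter.Tendsto (fun y : ℝ => |y| ^ (q - 1)) (nhds 0) (nhds 0) := by
      have h1 : ContinuousAt (fun z : ℝ => z ^ (q-1)) (|(0:ℝ)|) := by
        simpa using Real.continuousAt_rpow_const 0 (q-1) (Or.inr (by linarith))
      have := h1.comp (continuous_abs.continuousAt (x := (0:ℝ)))
      simpa [ContinuousAt, Function.comp_def, Real.zero_rpow (by linarith : q - 1 ≠ 0)] using this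
    exact squeeze_zero_norm hb (hten.mono_left nhdsWithin_le_nhds)
  · have h : (fun x : ℝ => max x 0 ^ q) =ᶠ[nhds x] fun y => y ^ q := by
      filter_upwards [Ioi_mem_nhds hx] with y hy
      rw [max_eq_left (le_of_lt hy)]
    rw [max_eq_left hx.le]
    exact (Real.hasDerivAt_rpow_const (Or.inl (ne_of_gt hx))).congr_of_eventuallyEq h



lemma one_le_sqrt1 (ξ : ℝ) : 1 ≤ Real.sqrt (1 + ξ^2) := by
  nlinarith [Real.sq_sqrt (show (0:ℝ) ≤ 1+ξ^2 by positivity), Real.sqrt_nonneg (1+ξ^2)]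

lemma self_le_sqrt1 {ξ : ℝ} (hξ : 0 ≤ ξ) : ξ ≤ Real.sqrt (1 + ξ^2) := by
  nlinarith [Real.sq_sqrt (show (0:ℝ) ≤ 1+ξ^2 by positivity), Real.sqrt_nonneg (1+ξ^2)]

lemma sqrt1_pos (ξ : ℝ) : 0 < Real.sqrt (1 + ξ^2) := lt_of_lt_of_le one_pos (one_le_sqrt1 ξ)

lemma max_eq_zero_of_ge {α ε ξ : ℝ} (hε : 0 < ε) (hξ : α/ε ≤ ξ) (hξ0 : 0 ≤ ξ) :
    max (α - ε * Real.sqrt (1 + ξ^2)) 0 = 0 := by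
  apply max_eq_right
  have h1 : α ≤ ε * ξ := by rw [div_le_iff₀ hε] at hξ; linarith [hξ]
  have h2 : ε * ξ ≤ ε * Real.sqrt (1+ξ^2) := by
    exact mul_le_mul_of_nonneg_left (self_le_sqrt1 hξ0) hε.le
  linarith

lemma maxfun_cont {α ε q : ℝ} (hq : 0 ≤ q) :
    Continuous (fun ξ : ℝ => max (α - ε * Real.sqrt (1 + ξ^2)) 0 ^ q) := by
  apply Continuous.rpow_const
  · exact (continuous_const.sub (continuous_const.mul
      ((continuous_const.add (continuous_pow 2)).sqrt))).max continuous_const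
  · exact fun x => Or.inr hq

lemma integrableOn_of_zero_ge {k : ℝ → ℝ} {R : ℝ} (hk : Continuous k) (hR : 0 < R)
    (h0 : ∀ ξ, R ≤ ξ → k ξ = 0) : IntegrableOn k (Ioi (0:ℝ)) := by
  have h1 : IntegrableOn k (Ioc 0 R) :=
    (hk.continuousOn.integrableOn_Icc).mono_set Ioc_subset_Icc_self
  have h2 : IntegrableOn k (Ioi R) := by
    apply (integrableOn_zero (s := Ioi R)).congr_fun _ measurableSet_Ioi
    intro x hx; exact (h0 x (le_of_lt hx)).symm
  have : Ioi (0:ℝ) ⊆ Ioc 0 R ∪ Ioi R := by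
    intro x hx
    rcases le_or_gt x R with h | h
    · exact Or.inl ⟨hx, h⟩
    · exact Or.inr h
  exact (h1.union h2).mono_set this






section aux
variable {σ α : ℝ}


lemma fF_cont (hσ : 0 < σ) (ε : ℝ) :
    Continuous (fun ξ : ℝ => ξ ^ 2 * (max (α - ε * Real.sqrt (1 + ξ ^ 2)) 0) ^ (σ + 1)) :=
  (continuous_pow 2).mul (maxfun_cont (by linarith))

lemma gF_cont (hσ : 0 < σ) (ε : ℝ) : Continuous (gF σ α ε) :=
  ((continuous_pow 2).mul ((continuous_const.add (continuous_pow 2)).sqrt)).mul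
    (maxfun_cont hσ.le)

lemma fF_int (hσ : 0 < σ) (hα : 0 < α) {ε : ℝ} (hε : 0 < ε) :
    IntegrableOn (fun ξ : ℝ => ξ ^ 2 * (max (α - ε * Real.sqrt (1 + ξ ^ 2)) 0) ^ (σ + 1))
      (Ioi (0:ℝ)) := by
  apply integrableOn_of_zero_ge (fF_cont hσ ε) (div_pos hα hε)
  intro ξ hξ
  have hξ0 : 0 ≤ ξ := le_trans (div_pos hα hε).le hξ
  rw [max_eq_zero_of_ge hε hξ hξ0, Real.zero_rpow (by linarith), mul_zero]

lemma gF_int (hσ : 0 < σ) (hα : 0 < α) {ε : ℝ} (hε : 0 < ε) :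
    IntegrableOn (gF σ α ε) (Ioi (0:ℝ)) := by
  apply integrableOn_of_zero_ge (gF_cont hσ ε) (div_pos hα hε)
  intro ξ hξ
  have hξ0 : 0 ≤ ξ := le_trans (div_pos hα hε).le hξ
  rw [gF, max_eq_zero_of_ge hε hξ hξ0, Real.zero_rpow (by linarith), mul_zero]

lemma Gfun_nonneg (hσ : 0 < σ) (ε : ℝ) : 0 ≤ Gfun σ α ε := by
  apply integral_nonneg
  intro ξ
  have := Real.rpow_nonneg (le_max_right (α - ε * Real.sqrt (1 + ξ ^ 2)) 0) (σ+1)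
  positivity

lemma Gfun_eq_zero (hσ : 0 < σ) (hα : 0 < α) {ε : ℝ} (hε : α ≤ ε) : Gfun σ α ε = 0 := by
  rw [Gfun]
  rw [setIntegral_congr_fun measurableSet_Ioi (g := fun _ => (0:ℝ))]
  · simp
  · intro ξ hξ
    simp only [mem_Ioi] at hξ
    have h2 : (1:ℝ) < Real.sqrt (1+ξ^2) := by
      nlinarith [Real.sq_sqrt (show (0:ℝ) ≤ 1+ξ^2 by positivity), Real.sqrt_nonneg (1+ξ^2),
        sq_nonneg ξ, hξ]
    have h3 : α - ε * Real.sqrt (1+ξ^2) < 0 := by nlinarith [sqrt1_pos ξ]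
    simp only []
    rw [max_eq_right h3.le, Real.zero_rpow (by linarith), mul_zero]

lemma Hfun_eq_zero (hσ : 0 < σ) (hα : 0 < α) {ε : ℝ} (hε : α ≤ ε) : Hfun σ α ε = 0 := by
  rw [Hfun]
  rw [setIntegral_congr_fun measurableSet_Ioi (g := fun _ => (0:ℝ))]
  · simp
  · intro ξ hξ
    simp only [mem_Ioi] at hξ
    have h2 : (1:ℝ) < Real.sqrt (1+ξ^2) := by
      nlinarith [Real.sq_sqrt (show (0:ℝ) ≤ 1+ξ^2 by positivity), Real.sqrt_nonneg (1+ξ^2),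
        sq_nonneg ξ, hξ]
    have : α - ε * Real.sqrt (1+ξ^2) < 0 := by nlinarith [sqrt1_pos ξ]
    rw [gF, max_eq_right this.le, Real.zero_rpow (by linarith), mul_zero]

end aux







section deriv
variable {σ α : ℝ}

lemma max_le_alpha {ε ξ : ℝ} (hα : 0 < α) (hε : 0 ≤ ε) :
    max (α - ε * Real.sqrt (1 + ξ^2)) 0 ≤ α := by
  apply max_le _ hα.le
  nlinarith [sqrt1_pos ξ, mul_nonneg hε (sqrt1_pos ξ).le]

lemma Gfun_hasDerivAt (hσ : 0 < σ) (hα : 0 < α) {ε₀ : ℝ} (hε : 0 < ε₀) :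
    HasDerivAt (Gfun σ α) (-(Hfun σ α ε₀)) ε₀ := by
  set R : ℝ := 2 * α / ε₀ with hR
  have hRpos : 0 < R := by positivity
  set C : ℝ := (σ+1) * R^2 * Real.sqrt (1+R^2) * α^σ with hC
  have hCpos : 0 ≤ C := by
    have := Real.rpow_nonneg hα.le σ
    have := (sqrt1_pos R).le
    positivity
  set F' : ℝ → ℝ → ℝ := fun ε ξ =>
    ξ ^ 2 * (((σ+1) * max (α - ε * Real.sqrt (1 + ξ ^ 2)) 0 ^ σ) * (-(Real.sqrt (1 + ξ^2))))
    with hF'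
  have key := hasDerivAt_integral_of_dominated_loc_of_deriv_le
    (μ := volume.restrict (Ioi (0:ℝ))) (x₀ := ε₀)
    (F := fun ε ξ => ξ ^ 2 * (max (α - ε * Real.sqrt (1 + ξ ^ 2)) 0) ^ (σ + 1))
    (F' := F') (bound := (Ioc (0:ℝ) R).indicator fun _ => C)
    (Metric.ball_mem_nhds ε₀ (half_pos hε))
    (Filter.Eventually.of_forall fun x => ((fF_cont hσ x).aestronglyMeasurable))
    (fF_int hσ hα hε)
    ?meas' ?bound ?boundint ?diff
  case meas' =>
    apply Continuous.aestronglyMeasurable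
    rw [hF']
    exact (continuous_pow 2).mul ((continuous_const.mul (maxfun_cont hσ.le)).mul
      ((continuous_const.add (continuous_pow 2)).sqrt.neg))
  case bound =>
    rw [ae_restrict_iff' measurableSet_Ioi]
    apply Filter.Eventually.of_forall
    intro ξ hξ x hx
    simp only [hF']
    simp only [mem_Ioi] at hξ
    rw [Metric.mem_ball, Real.dist_eq, abs_sub_lt_iff] at hx
    have hx0 : ε₀/2 < x := by linarith
    rcases le_or_gt R ξ with h | h
    · have : max (α - x * Real.sqrt (1 + ξ^2)) 0 = 0 := by
        apply max_eq_zero_of_ge (by linarith) _ hξ.le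
        calc α / x ≤ α/(ε₀/2) := by
              apply div_le_div_of_nonneg_left hα.le (by linarith) hx0.le
          _ = R := by rw [hR]; ring
          _ ≤ ξ := h
      rw [this, Real.zero_rpow (ne_of_gt hσ)]
      simp only [mul_zero, zero_mul, norm_zero]
      exact indicator_nonneg (fun _ _ => hCpos) ξ
    · have hmem : ξ ∈ Ioc 0 R := ⟨hξ, h.le⟩
      rw [show (Ioc 0 R).indicator (fun _ => C) ξ = C from Set.indicator_of_mem hmem _]
      rw [norm_mul, norm_mul, norm_mul, norm_neg]
      have h1 : ‖ξ^2‖ ≤ R^2 := by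
        rw [Real.norm_eq_abs, abs_of_nonneg (by positivity)]
        nlinarith
      have h2 : ‖max (α - x * Real.sqrt (1 + ξ^2)) 0 ^ σ‖ ≤ α ^ σ := by
        rw [Real.norm_eq_abs, abs_of_nonneg (Real.rpow_nonneg (le_max_right _ _) σ)]
        exact Real.rpow_le_rpow (le_max_right _ _) (max_le_alpha hα (by linarith)) hσ.le
      have h3 : ‖Real.sqrt (1+ξ^2)‖ ≤ Real.sqrt (1+R^2) := by
        rw [Real.norm_eq_abs, abs_of_nonneg (Real.sqrt_nonneg _)]
        apply Real.sqrt_le_sqrt; nlinarith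
      have h4 : ‖(σ+1 : ℝ)‖ = σ+1 := by
        rw [Real.norm_eq_abs, abs_of_pos (by linarith)]
      rw [hC]
      calc ‖ξ^2‖ * (‖(σ+1:ℝ)‖ * ‖max (α - x * Real.sqrt (1 + ξ^2)) 0 ^ σ‖ * ‖Real.sqrt (1+ξ^2)‖)
          ≤ R^2 * ((σ+1) * α^σ * Real.sqrt (1+R^2)) := by
            rw [h4]
            apply mul_le_mul h1 _ (by positivity) (by positivity)
            apply mul_le_mul _ h3 (norm_nonneg _) (by positivity)
            apply mul_le_mul_of_nonneg_left h2 (by linarith)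
        _ = (σ+1) * R^2 * Real.sqrt (1+R^2) * α^σ := by ring
  case boundint =>
    rw [integrable_indicator_iff measurableSet_Ioc]
    refine integrableOn_const ?_ enorm_ne_top
    rw [Measure.restrict_apply measurableSet_Ioc]
    exact (lt_of_le_of_lt (measure_mono inter_subset_left)
      (by rw [Real.volume_Ioc]; exact ENNReal.ofReal_lt_top)).ne
  case diff =>
    apply Filter.Eventually.of_forall
    intro ξ x _
    have inner : HasDerivAt (fun ε : ℝ => α - ε * Real.sqrt (1 + ξ^2))
        (-(Real.sqrt (1+ξ^2))) x := by
      simpa using ((hasDerivAt_id x).mul_const (Real.sqrt (1+ξ^2))).const_sub α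
    have outer := (maxpow_hasDerivAt (by linarith : 1 < σ + 1)
      (α - x * Real.sqrt (1 + ξ^2))).comp x inner
    have := outer.const_mul (ξ^2)
    simpa [hF', show σ + 1 - 1 = σ by ring, mul_comm, mul_assoc, mul_left_comm] using this
  · -- conclude
    have h2 : (∫ ξ in Ioi (0:ℝ), F' ε₀ ξ) = -(Hfun σ α ε₀) := by
      rw [Hfun, ← MeasureTheory.integral_const_mul, ← integral_neg]
      apply setIntegral_congr_fun measurableSet_Ioi
      intro ξ _
      simp only [hF', gF]
      ring
    rw [← h2]
    exact key.2
end deriv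







section part2
variable {σ α : ℝ}

lemma integral_Ioi_ge {k : ℝ → ℝ} {a b m : ℝ} (hint : IntegrableOn k (Ioi (0:ℝ)))
    (hnn : ∀ ξ ∈ Ioi (0:ℝ), 0 ≤ k ξ) (ha : 0 < a) (hab : a ≤ b)
    (hm : ∀ ξ ∈ Icc a b, m ≤ k ξ) : m * (b - a) ≤ ∫ ξ in Ioi (0:ℝ), k ξ := by
  have hsub : Icc a b ⊆ Ioi (0:ℝ) := fun x hx => lt_of_lt_of_le ha hx.1
  have h1 : m * (b - a) ≤ ∫ ξ in Icc a b, k ξ := by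
    have := setIntegral_ge_of_const_le (μ := volume) (c := m) measurableSet_Icc
      (by rw [Real.volume_Icc]; exact ENNReal.ofReal_ne_top) hm (hint.mono_set hsub)
    rwa [Real.volume_real_Icc_of_le hab, smul_eq_mul, mul_comm] at this
  refine le_trans h1 (setIntegral_mono_set hint ?_ (HasSubset.Subset.eventuallyLE hsub))
  have h2 : ∀ᵐ x ∂(volume.restrict (Ioi (0:ℝ))), 0 ≤ k x :=
    (ae_restrict_iff' measurableSet_Ioi).2 (Filter.Eventually.of_forall hnn)
  exact h2

lemma gF_nonneg (σ α ε : ℝ) : ∀ ξ ∈ Ioi (0:ℝ), 0 ≤ gF σ α ε ξ := by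
  intro ξ _
  rw [gF]
  have := Real.rpow_nonneg (le_max_right (α - ε * Real.sqrt (1 + ξ ^ 2)) 0) σ
  have := (sqrt1_pos ξ).le
  positivity

lemma Hfun_strictAnti (hσ : 0 < σ) (hα : 0 < α) {ε₁ ε₂ : ℝ} (h1 : 0 < ε₁) (h12 : ε₁ < ε₂)
    (h2 : ε₂ ≤ α) : Hfun σ α ε₂ < Hfun σ α ε₁ := by
  have hε2 : 0 < ε₂ := lt_trans h1 h12
  set k : ℝ → ℝ := fun ξ => gF σ α ε₁ ξ - gF σ α ε₂ ξ with hk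
  have hknn : ∀ ξ ∈ Ioi (0:ℝ), 0 ≤ k ξ := by
    intro ξ _
    rw [hk]
    simp only [gF, sub_nonneg]
    apply mul_le_mul_of_nonneg_left _ (by positivity)
    apply Real.rpow_le_rpow (le_max_right _ _) _ hσ.le
    apply max_le_max_right
    nlinarith [sqrt1_pos ξ]
  -- choose interval
  have hc : 1 < α / ε₁ := (one_lt_div h1).2 (lt_of_lt_of_le h12 h2)
  set b : ℝ := Real.sqrt (((α/ε₁)^2 - 1)/2) with hb
  have hbpos : 0 < b := Real.sqrt_pos.2 (by nlinarith)
  have hbsq : 1 + b^2 < (α/ε₁)^2 := by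
    rw [hb, Real.sq_sqrt (by nlinarith : (0:ℝ) ≤ ((α/ε₁)^2 - 1)/2)]
    nlinarith
  set a : ℝ := b/2 with ha
  have hapos : 0 < a := by positivity
  have hab : a < b := by rw [ha]; linarith
  have hkpos : ∀ ξ ∈ Icc a b, 0 < k ξ := by
    intro ξ hξ
    have hξpos : 0 < ξ := lt_of_lt_of_le hapos hξ.1
    have hsq : 1 + ξ^2 < (α/ε₁)^2 := by nlinarith [hξ.2]
    have hsqrt : Real.sqrt (1 + ξ^2) < α/ε₁ := by
      have h0 : (0:ℝ) ≤ α/ε₁ := by positivity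
      nlinarith [Real.sq_sqrt (show (0:ℝ) ≤ 1+ξ^2 by positivity), Real.sqrt_nonneg (1+ξ^2)]
    have hpos1 : 0 < α - ε₁ * Real.sqrt (1 + ξ^2) := by
      rw [sub_pos]
      calc ε₁ * Real.sqrt (1+ξ^2) < ε₁ * (α/ε₁) := by
            exact mul_lt_mul_of_pos_left hsqrt h1
        _ = α := by field_simp
    have hlt : max (α - ε₂ * Real.sqrt (1 + ξ^2)) 0 < max (α - ε₁ * Real.sqrt (1 + ξ^2)) 0 := by
      rw [max_eq_left hpos1.le]
      apply max_lt _ hpos1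
      have := sqrt1_pos ξ
      nlinarith
    have hrpow : max (α - ε₂ * Real.sqrt (1 + ξ^2)) 0 ^ σ
        < max (α - ε₁ * Real.sqrt (1 + ξ^2)) 0 ^ σ :=
      Real.rpow_lt_rpow (le_max_right _ _) hlt hσ
    rw [hk]
    simp only [gF]
    have h2' : 0 < ξ^2 * Real.sqrt (1+ξ^2) := by
      have := sqrt1_pos ξ; positivity
    nlinarith
  have hkint : IntegrableOn k (Ioi (0:ℝ)) := (gF_int hσ hα h1).sub (gF_int hσ hα hε2)
  have hkcont : Continuous k := (gF_cont hσ ε₁).sub (gF_cont hσ ε₂)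
  obtain ⟨ξ₀, hξ₀mem, hξ₀min⟩ := isCompact_Icc.exists_isMinOn (nonempty_Icc.2 hab.le)
    (hkcont.continuousOn (s := Icc a b))
  have hmpos : 0 < k ξ₀ := hkpos ξ₀ hξ₀mem
  have hge := integral_Ioi_ge hkint hknn hapos hab.le (fun ξ hξ => hξ₀min hξ)
  have hintpos : 0 < ∫ ξ in Ioi (0:ℝ), k ξ := by
    have : 0 < k ξ₀ * (b - a) := by nlinarith
    linarith
  have heq : (∫ ξ in Ioi (0:ℝ), k ξ)
      = (∫ ξ in Ioi (0:ℝ), gF σ α ε₁ ξ) - ∫ ξ in Ioi (0:ℝ), gF σ α ε₂ ξ :=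
    integral_sub (gF_int hσ hα h1) (gF_int hσ hα hε2)
  rw [heq] at hintpos
  rw [Hfun, Hfun]
  nlinarith

lemma Hfun_blowup (hσ : 0 < σ) (hα : 0 < α) (M : ℝ) :
    ∃ δ : ℝ, 0 < δ ∧ ∀ ε : ℝ, 0 < ε → ε ≤ δ → M ≤ Hfun σ α ε := by
  set c : ℝ := (α/2) ^ σ with hc
  have hcpos : 0 < c := Real.rpow_pos_of_pos (by linarith) σ
  set X : ℝ := max 2 (1 + M / c) with hX
  have hX2 : (2:ℝ) ≤ X := le_max_left _ _
  set δ : ℝ := α / (2 * Real.sqrt (1 + X^2)) with hδ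
  have hδpos : 0 < δ := by
    have := sqrt1_pos X
    positivity
  refine ⟨δ, hδpos, fun ε hε hεδ => ?_⟩
  have hbound : ∀ ξ ∈ Icc (1:ℝ) X, c ≤ gF σ α ε ξ := by
    intro ξ hξ
    have hξ1 : 1 ≤ ξ := hξ.1
    have hξX : ξ ≤ X := hξ.2
    have hs : Real.sqrt (1 + ξ^2) ≤ Real.sqrt (1 + X^2) :=
      Real.sqrt_le_sqrt (by nlinarith)
    have hεs : ε * Real.sqrt (1 + ξ^2) ≤ α/2 := by
      calc ε * Real.sqrt (1+ξ^2) ≤ δ * Real.sqrt (1+X^2) := by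
            apply mul_le_mul hεδ hs (Real.sqrt_nonneg _) hδpos.le
        _ = α/2 := by
            rw [hδ]
            field_simp
    have hmax : α/2 ≤ max (α - ε * Real.sqrt (1+ξ^2)) 0 := by
      apply le_max_of_le_left
      linarith
    rw [gF, hc]
    calc (α/2)^σ ≤ max (α - ε * Real.sqrt (1+ξ^2)) 0 ^ σ :=
          Real.rpow_le_rpow (by linarith) hmax hσ.le
      _ = 1 * 1 * max (α - ε * Real.sqrt (1+ξ^2)) 0 ^ σ := by ring
      _ ≤ ξ^2 * Real.sqrt (1+ξ^2) * max (α - ε * Real.sqrt (1+ξ^2)) 0 ^ σ := by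
          apply mul_le_mul _ le_rfl (Real.rpow_nonneg (le_max_right _ _) σ) _
          · apply mul_le_mul (by nlinarith) (one_le_sqrt1 ξ) zero_le_one (by nlinarith)
          · have := (sqrt1_pos ξ).le; nlinarith [one_le_sqrt1 ξ]
  have hge := integral_Ioi_ge (gF_int hσ hα hε) (gF_nonneg σ α ε) one_pos
    (by linarith : (1:ℝ) ≤ X) hbound
  have hMcX : M ≤ c * (X - 1) := by
    have h1 : 1 + M / c ≤ X := le_max_right _ _
    calc M = c * (M / c) := by field_simp
      _ ≤ c * (X - 1) := by
          apply mul_le_mul_of_nonneg_left _ hcpos.le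
          linarith
  rw [Hfun]
  calc M ≤ c * (X - 1) := hMcX
    _ ≤ ∫ ξ in Ioi (0:ℝ), gF σ α ε ξ := hge
    _ ≤ (σ+1) * ∫ ξ in Ioi (0:ℝ), gF σ α ε ξ := by
        have hI : 0 ≤ ∫ ξ in Ioi (0:ℝ), gF σ α ε ξ :=
          le_trans (by nlinarith : (0:ℝ) ≤ c * (X - 1)) hge
        nlinarith
end part2







section part3
variable {σ α : ℝ}

lemma integral_Ioi_pos {k : ℝ → ℝ} {a b : ℝ} (hkcont : Continuous k)
    (hint : IntegrableOn k (Ioi (0:ℝ))) (hnn : ∀ ξ ∈ Ioi (0:ℝ), 0 ≤ k ξ)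
    (ha : 0 < a) (hab : a < b) (hpos : ∀ ξ ∈ Icc a b, 0 < k ξ) :
    0 < ∫ ξ in Ioi (0:ℝ), k ξ := by
  obtain ⟨ξ₀, hξ₀mem, hξ₀min⟩ := isCompact_Icc.exists_isMinOn (nonempty_Icc.2 hab.le)
    (hkcont.continuousOn (s := Icc a b))
  have hge := integral_Ioi_ge hint hnn ha hab.le (fun ξ hξ => hξ₀min hξ)
  have := hpos ξ₀ hξ₀mem
  nlinarith

lemma Gfun_blowup (hσ : 0 < σ) (hα : 0 < α) (M : ℝ) :
    ∃ δ : ℝ, 0 < δ ∧ ∀ ε : ℝ, 0 < ε → ε ≤ δ → M ≤ Gfun σ α ε := by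
  set c : ℝ := (α/2) ^ (σ+1) with hc
  have hcpos : 0 < c := Real.rpow_pos_of_pos (by linarith) (σ+1)
  set X : ℝ := max 2 (1 + M / c) with hX
  have hX2 : (2:ℝ) ≤ X := le_max_left _ _
  set δ : ℝ := α / (2 * Real.sqrt (1 + X^2)) with hδ
  have hδpos : 0 < δ := by
    have := sqrt1_pos X
    positivity
  refine ⟨δ, hδpos, fun ε hε hεδ => ?_⟩
  have hbound : ∀ ξ ∈ Icc (1:ℝ) X,
      c ≤ ξ ^ 2 * (max (α - ε * Real.sqrt (1 + ξ ^ 2)) 0) ^ (σ + 1) := by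
    intro ξ hξ
    have hξ1 : 1 ≤ ξ := hξ.1
    have hξX : ξ ≤ X := hξ.2
    have hs : Real.sqrt (1 + ξ^2) ≤ Real.sqrt (1 + X^2) :=
      Real.sqrt_le_sqrt (by nlinarith)
    have hεs : ε * Real.sqrt (1 + ξ^2) ≤ α/2 := by
      calc ε * Real.sqrt (1+ξ^2) ≤ δ * Real.sqrt (1+X^2) := by
            apply mul_le_mul hεδ hs (Real.sqrt_nonneg _) hδpos.le
        _ = α/2 := by
            rw [hδ]; field_simp
    have hmax : α/2 ≤ max (α - ε * Real.sqrt (1+ξ^2)) 0 := le_max_of_le_left (by linarith)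
    rw [hc]
    calc (α/2)^(σ+1) ≤ max (α - ε * Real.sqrt (1+ξ^2)) 0 ^ (σ+1) :=
          Real.rpow_le_rpow (by linarith) hmax (by linarith)
      _ = 1 * max (α - ε * Real.sqrt (1+ξ^2)) 0 ^ (σ+1) := by ring
      _ ≤ ξ^2 * max (α - ε * Real.sqrt (1+ξ^2)) 0 ^ (σ+1) := by
          apply mul_le_mul (by nlinarith) le_rfl
            (Real.rpow_nonneg (le_max_right _ _) (σ+1)) (by nlinarith)
  have hge := integral_Ioi_ge (fF_int hσ hα hε)
    (fun ξ _ => by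
      have := Real.rpow_nonneg (le_max_right (α - ε * Real.sqrt (1 + ξ ^ 2)) 0) (σ+1)
      positivity)
    one_pos (by linarith : (1:ℝ) ≤ X) hbound
  have hMcX : M ≤ c * (X - 1) := by
    have h1 : 1 + M / c ≤ X := le_max_right _ _
    calc M = c * (M / c) := by field_simp
      _ ≤ c * (X - 1) := by
          apply mul_le_mul_of_nonneg_left _ hcpos.le
          linarith
  rw [Gfun]
  exact le_trans hMcX hge

lemma Gfun_pos (hσ : 0 < σ) (hα : 0 < α) {ε : ℝ} (hε : 0 < ε) (hεα : ε < α) :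
    0 < Gfun σ α ε := by
  have hc : 1 < α / ε := (one_lt_div hε).2 hεα
  set b : ℝ := Real.sqrt (((α/ε)^2 - 1)/2) with hb
  have hbpos : 0 < b := Real.sqrt_pos.2 (by nlinarith)
  have hbsq : 1 + b^2 < (α/ε)^2 := by
    rw [hb, Real.sq_sqrt (by nlinarith : (0:ℝ) ≤ ((α/ε)^2 - 1)/2)]
    nlinarith
  rw [Gfun]
  apply integral_Ioi_pos (a := b/2) (b := b) (fF_cont hσ ε) (fF_int hσ hα hε)
    (fun ξ _ => by
      have := Real.rpow_nonneg (le_max_right (α - ε * Real.sqrt (1 + ξ ^ 2)) 0) (σ+1)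
      positivity)
    (by positivity) (by linarith)
  intro ξ hξ
  have hξpos : 0 < ξ := lt_of_lt_of_le (by positivity) hξ.1
  have hsq : 1 + ξ^2 < (α/ε)^2 := by nlinarith [hξ.2]
  have hsqrt : Real.sqrt (1 + ξ^2) < α/ε := by
    have h0 : (0:ℝ) ≤ α/ε := by positivity
    nlinarith [Real.sq_sqrt (show (0:ℝ) ≤ 1+ξ^2 by positivity), Real.sqrt_nonneg (1+ξ^2)]
  have hpos1 : 0 < α - ε * Real.sqrt (1 + ξ^2) := by
    rw [sub_pos]
    calc ε * Real.sqrt (1+ξ^2) < ε * (α/ε) := mul_lt_mul_of_pos_left hsqrt hε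
      _ = α := by field_simp
  have : 0 < max (α - ε * Real.sqrt (1 + ξ^2)) 0 ^ (σ+1) := by
    rw [max_eq_left hpos1.le]
    exact Real.rpow_pos_of_pos hpos1 (σ+1)
  positivity

lemma Hfun_continuousAt (hσ : 0 < σ) (hα : 0 < α) {ε₀ : ℝ} (hε : 0 < ε₀) :
    ContinuousAt (Hfun σ α) ε₀ := by
  apply ContinuousAt.mul continuousAt_const
  set R : ℝ := 2 * α / ε₀ with hR
  have hRpos : 0 < R := by positivity
  set C : ℝ := R^2 * Real.sqrt (1+R^2) * α^σ with hC
  have hCpos : 0 ≤ C := by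
    have := Real.rpow_nonneg hα.le σ
    have := (sqrt1_pos R).le
    positivity
  apply continuousAt_of_dominated (bound := (Ioc (0:ℝ) R).indicator fun _ => C)
  · exact Filter.Eventually.of_forall fun x => (gF_cont hσ x).aestronglyMeasurable
  · filter_upwards [Ioi_mem_nhds (by linarith : ε₀/2 < ε₀)] with x hx
    rw [ae_restrict_iff' measurableSet_Ioi]
    apply Filter.Eventually.of_forall
    intro ξ hξ
    simp only [mem_Ioi] at hξ hx
    rcases le_or_gt R ξ with h | h
    · have hmax : max (α - x * Real.sqrt (1 + ξ^2)) 0 = 0 := by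
        apply max_eq_zero_of_ge (by linarith) _ hξ.le
        calc α / x ≤ α/(ε₀/2) := div_le_div_of_nonneg_left hα.le (by linarith) hx.le
          _ = R := by rw [hR]; ring
          _ ≤ ξ := h
      rw [gF, hmax, Real.zero_rpow (ne_of_gt hσ), mul_zero, norm_zero]
      exact indicator_nonneg (fun _ _ => hCpos) ξ
    · have hmem : ξ ∈ Ioc 0 R := ⟨hξ, h.le⟩
      rw [show (Ioc 0 R).indicator (fun _ => C) ξ = C from Set.indicator_of_mem hmem _]
      rw [gF, norm_mul, norm_mul, hC]
      have h1 : ‖ξ^2‖ ≤ R^2 := by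
        rw [Real.norm_eq_abs, abs_of_nonneg (by positivity)]; nlinarith
      have h2 : ‖max (α - x * Real.sqrt (1 + ξ^2)) 0 ^ σ‖ ≤ α ^ σ := by
        rw [Real.norm_eq_abs, abs_of_nonneg (Real.rpow_nonneg (le_max_right _ _) σ)]
        exact Real.rpow_le_rpow (le_max_right _ _) (max_le_alpha hα (by linarith)) hσ.le
      have h3 : ‖Real.sqrt (1+ξ^2)‖ ≤ Real.sqrt (1+R^2) := by
        rw [Real.norm_eq_abs, abs_of_nonneg (Real.sqrt_nonneg _)]
        apply Real.sqrt_le_sqrt; nlinarith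
      have h4 : ‖ξ^2‖ * ‖Real.sqrt (1+ξ^2)‖ ≤ R^2 * Real.sqrt (1+R^2) :=
        mul_le_mul h1 h3 (norm_nonneg _) (by positivity)
      exact mul_le_mul h4 h2 (norm_nonneg _) (by positivity)
  · rw [integrable_indicator_iff measurableSet_Ioc]
    refine integrableOn_const ?_ enorm_ne_top
    rw [Measure.restrict_apply measurableSet_Ioc]
    exact (lt_of_le_of_lt (measure_mono inter_subset_left)
      (by rw [Real.volume_Ioc]; exact ENNReal.ofReal_lt_top)).ne
  · apply Filter.Eventually.of_forall
    intro ξ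
    have : Continuous (fun x : ℝ => gF σ α x ξ) := by
      simp only [gF]
      apply Continuous.mul continuous_const
      apply Continuous.rpow_const _ (fun _ => Or.inr hσ.le)
      exact (continuous_const.sub (continuous_id.mul continuous_const)).max continuous_const
    exact this.continuousAt
end part3


lemma Gfun_anti {σ α : ℝ} (hσ : 0 < σ) (hα : 0 < α) {ε₁ ε₂ : ℝ} (h1 : 0 < ε₁)
    (h12 : ε₁ ≤ ε₂) : Gfun σ α ε₂ ≤ Gfun σ α ε₁ := by
  have h2 : 0 < ε₂ := lt_of_lt_of_le h1 h12
  rw [Gfun, Gfun]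
  apply setIntegral_mono_on (fF_int hσ hα h2) (fF_int hσ hα h1) measurableSet_Ioi
  intro ξ _
  apply mul_le_mul_of_nonneg_left _ (by positivity)
  apply Real.rpow_le_rpow (le_max_right _ _) _ (by linarith)
  apply max_le_max_right
  nlinarith [sqrt1_pos ξ]









section logic
variable {σ α : ℝ}

lemma Hfun_anti (hσ : 0 < σ) (hα : 0 < α) {a b : ℝ} (ha : 0 < a) (hab : a ≤ b) (hb : b ≤ α) :
    Hfun σ α b ≤ Hfun σ α a := by
  rcases eq_or_lt_of_le hab with h | h
  · rw [h]
  · exact (Hfun_strictAnti hσ hα ha h hb).le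

lemma Hfun_pos (hσ : 0 < σ) (hα : 0 < α) {ε : ℝ} (hε : 0 < ε) (hεα : ε < α) :
    0 < Hfun σ α ε := by
  have := Hfun_strictAnti hσ hα hε hεα le_rfl
  rwa [Hfun_eq_zero hσ hα le_rfl] at this

/-- The set whose supremum defines `calG σ α s`. -/
def Sset (σ α s : ℝ) : Set ℝ := {y : ℝ | ∃ ε : ℝ, 0 < ε ∧ y = ε * (-s) - Gfun σ α ε}

lemma calG_eq_sSup (σ α s : ℝ) : calG σ α s = sSup (Sset σ α s) := rfl

lemma Sset_nonempty (σ α s : ℝ) (hα : 0 < α) : (Sset σ α s).Nonempty :=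
  ⟨α * (-s) - Gfun σ α α, α, hα, rfl⟩

lemma Sset_bddAbove (hσ : 0 < σ) {s : ℝ} (hs : 0 ≤ s) : BddAbove (Sset σ α s) := by
  refine ⟨0, fun y hy => ?_⟩
  obtain ⟨ε, hε, rfl⟩ := hy
  have h1 := Gfun_nonneg (α := α) hσ ε
  nlinarith

lemma calG_ge (hσ : 0 < σ) {s : ℝ} (hs : 0 ≤ s) {ε : ℝ} (hε : 0 < ε) :
    ε * (-s) - Gfun σ α ε ≤ calG σ α s :=
  le_csSup (Sset_bddAbove hσ hs) ⟨ε, hε, rfl⟩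

lemma calG_zero (hσ : 0 < σ) (hα : 0 < α) : calG σ α 0 = 0 := by
  rw [calG_eq_sSup]
  apply IsGreatest.csSup_eq
  constructor
  · exact ⟨α, hα, by rw [Gfun_eq_zero hσ hα le_rfl]; ring⟩
  · rintro y ⟨ε, hε, rfl⟩
    have h1 := Gfun_nonneg (α := α) hσ ε
    nlinarith

lemma exists_root (hσ : 0 < σ) (hα : 0 < α) {s : ℝ} (hs : 0 < s) :
    ∃ ε, ε ∈ Ioo 0 α ∧ Hfun σ α ε = s := by
  obtain ⟨δ, hδpos, hδ⟩ := Hfun_blowup (α := α) hσ hα (s+1)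
  set δ' : ℝ := min δ (α/2) with hδ'
  have hδ'pos : 0 < δ' := lt_min hδpos (by linarith)
  have hδ'α : δ' ≤ α := le_trans (min_le_right _ _) (by linarith)
  have hHδ' : s + 1 ≤ Hfun σ α δ' := hδ δ' hδ'pos (min_le_left _ _)
  have hcont : ContinuousOn (Hfun σ α) (Icc δ' α) := fun x hx =>
    (Hfun_continuousAt hσ hα (lt_of_lt_of_le hδ'pos hx.1)).continuousWithinAt
  have hmem : s ∈ Icc (Hfun σ α α) (Hfun σ α δ') := by
    rw [Hfun_eq_zero hσ hα le_rfl]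
    exact ⟨hs.le, by linarith⟩
  obtain ⟨ε, hεmem, hεval⟩ := intermediate_value_Icc' hδ'α hcont hmem
  refine ⟨ε, ⟨lt_of_lt_of_le hδ'pos hεmem.1, lt_of_le_of_ne hεmem.2 ?_⟩, hεval⟩
  intro h
  rw [h, Hfun_eq_zero hσ hα le_rfl] at hεval
  linarith

open Classical in
noncomputable def epsStar (σ α s : ℝ) : ℝ :=
  if h : ∃ ε, ε ∈ Set.Ioo 0 α ∧ Hfun σ α ε = s then h.choose else α

lemma epsStar_spec (hσ : 0 < σ) (hα : 0 < α) {s : ℝ} (hs : 0 < s) :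
    epsStar σ α s ∈ Ioo 0 α ∧ Hfun σ α (epsStar σ α s) = s := by
  have h := exists_root hσ hα (α := α) hs
  classical
  rw [epsStar]
  rw [dif_pos h]
  exact h.choose_spec

/-- `ψ s ε := ε s + G ε`. -/
noncomputable def psi (σ α s ε : ℝ) : ℝ := ε * s + Gfun σ α ε

lemma psi_hasDerivAt (hσ : 0 < σ) (hα : 0 < α) (s : ℝ) {ε : ℝ} (hε : 0 < ε) :
    HasDerivAt (psi σ α s) (s - Hfun σ α ε) ε := by
  have h1 := ((hasDerivAt_id ε).mul_const s).add (Gfun_hasDerivAt hσ hα hε)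
  exact (h1.congr_of_eventuallyEq (Filter.Eventually.of_forall fun y => rfl)).congr_deriv (by ring)

lemma psi_min (hσ : 0 < σ) (hα : 0 < α) {s : ℝ} (hs : 0 < s) {ε : ℝ} (hε : 0 < ε) :
    psi σ α s (epsStar σ α s) ≤ psi σ α s ε := by
  obtain ⟨⟨he0, heα⟩, heH⟩ := epsStar_spec hσ hα (α := α) hs
  set e := epsStar σ α s
  have hmono : StrictMonoOn (psi σ α s) (Ici e) := by
    apply strictMonoOn_of_deriv_pos (convex_Ici e)
    · intro x hx
      exact (psi_hasDerivAt hσ hα s (lt_of_lt_of_le he0 hx)).continuousAt.continuousWithinAt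
    · intro x hx
      rw [interior_Ici, mem_Ioi] at hx
      have hx0 : 0 < x := lt_trans he0 hx
      rw [(psi_hasDerivAt hσ hα s hx0).deriv]
      rcases le_or_gt x α with h | h
      · have := Hfun_strictAnti hσ hα he0 hx h
        rw [heH] at this
        linarith
      · rw [Hfun_eq_zero hσ hα h.le]
        linarith
  have hanti : StrictAntiOn (psi σ α s) (Ioc 0 e) := by
    apply strictAntiOn_of_deriv_neg (convex_Ioc 0 e)
    · intro x hx
      exact (psi_hasDerivAt hσ hα s hx.1).continuousAt.continuousWithinAt
    · intro x hx
      rw [interior_Ioc] at hx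
      rw [(psi_hasDerivAt hσ hα s hx.1).deriv]
      have := Hfun_strictAnti hσ hα hx.1 hx.2 heα.le
      rw [heH] at this
      linarith
  rcases lt_trichotomy ε e with h | h | h
  · exact (hanti ⟨hε, h.le⟩ ⟨he0, le_rfl⟩ h).le
  · rw [h]
  · exact (hmono (self_mem_Ici) (le_of_lt h) h).le

lemma calG_rep (hσ : 0 < σ) (hα : 0 < α) {s : ℝ} (hs : 0 < s) :
    calG σ α s = -(psi σ α s (epsStar σ α s)) := by
  rw [calG_eq_sSup]
  apply IsGreatest.csSup_eq
  constructor
  · exact ⟨epsStar σ α s, (epsStar_spec hσ hα hs).1.1, by rw [psi]; ring⟩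
  · rintro y ⟨ε, hε, rfl⟩
    have h2 := psi_min hσ hα (α := α) hs hε
    rw [psi, psi] at h2
    rw [psi]
    nlinarith

lemma calG_support (hσ : 0 < σ) (hα : 0 < α) {s t : ℝ} (hs : 0 < s) (ht : 0 ≤ t) :
    calG σ α s - epsStar σ α s * (t - s) ≤ calG σ α t := by
  have h1 := calG_ge (α := α) hσ ht (epsStar_spec hσ hα (α := α) hs).1.1
  rw [calG_rep hσ hα hs, psi]
  linarith

end logic

section logic2
variable {σ α : ℝ}

lemma epsStar_tendsto (hσ : 0 < σ) (hα : 0 < α) {s : ℝ} (hs : 0 < s) :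
    Filter.Tendsto (epsStar σ α) (nhdsWithin s {s}ᶜ) (nhds (epsStar σ α s)) := by
  obtain ⟨⟨he0, heα⟩, heH⟩ := epsStar_spec hσ hα (α := α) hs
  set e := epsStar σ α s with he
  rw [Metric.tendsto_nhdsWithin_nhds]
  intro δ hδ
  set δ' : ℝ := min (δ/2) (min (e/2) ((α - e)/2)) with hδ'
  have hδ'pos : 0 < δ' := lt_min (by linarith) (lt_min (by linarith) (by linarith))
  have hδ'δ : δ' ≤ δ/2 := min_le_left _ _
  have hδ'e : δ' ≤ e/2 := le_trans (min_le_right _ _) (min_le_left _ _)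
  have hδ'α : δ' ≤ (α - e)/2 := le_trans (min_le_right _ _) (min_le_right _ _)
  set lo : ℝ := e - δ' with hlo
  set hi : ℝ := e + δ' with hhi
  have hlopos : 0 < lo := by rw [hlo]; linarith
  have hhiα : hi < α := by rw [hhi]; linarith
  have hHhi : Hfun σ α hi < s := by
    have := Hfun_strictAnti hσ hα he0 (show e < hi by rw [hhi]; linarith) hhiα.le
    rwa [heH] at this
  have hHlo : s < Hfun σ α lo := by
    have := Hfun_strictAnti hσ hα hlopos (show lo < e by rw [hlo]; linarith) heα.le
    rwa [heH] at this
  have hHhipos : 0 < Hfun σ α hi := Hfun_pos hσ hα (by rw [hhi]; linarith) hhiα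
  refine ⟨min (s - Hfun σ α hi) (Hfun σ α lo - s),
    lt_min (by linarith) (by linarith), fun t _ hdist => ?_⟩
  rw [Real.dist_eq, abs_lt] at hdist
  have ht1 : Hfun σ α hi < t := by
    have := hdist.1
    have h2 : -(s - Hfun σ α hi) ≤ -min (s - Hfun σ α hi) (Hfun σ α lo - s) := by
      simp only [neg_le_neg_iff]
      exact min_le_left _ _
    linarith
  have ht2 : t < Hfun σ α lo := by
    have := hdist.2
    have h2 : min (s - Hfun σ α hi) (Hfun σ α lo - s) ≤ Hfun σ α lo - s := min_le_right _ _
    linarith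
  have htpos : 0 < t := lt_trans hHhipos ht1
  obtain ⟨⟨ht0, htα⟩, htH⟩ := epsStar_spec hσ hα (α := α) htpos
  set et := epsStar σ α t with het
  have h1 : lo < et := by
    by_contra h
    push_neg at h
    have := Hfun_anti hσ hα ht0 h (by linarith : lo ≤ α)
    rw [htH] at this
    linarith
  have h2 : et < hi := by
    by_contra h
    push_neg at h
    have := Hfun_anti hσ hα (by rw [hhi]; linarith : (0:ℝ) < hi) h htα.le
    rw [htH] at this
    linarith
  rw [Real.dist_eq, abs_lt]
  constructor
  · rw [hlo] at h1; linarith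
  · rw [hhi] at h2; linarith

lemma calG_hasDerivAt (hσ : 0 < σ) (hα : 0 < α) {s : ℝ} (hs : 0 < s) :
    HasDerivAt (calG σ α) (-(epsStar σ α s)) s := by
  obtain ⟨⟨he0, heα⟩, _⟩ := epsStar_spec hσ hα (α := α) hs
  set e := epsStar σ α s with he
  rw [hasDerivAt_iff_tendsto_slope]
  rw [← tendsto_sub_nhds_zero_iff]
  apply squeeze_zero_norm' (a := fun t => ‖epsStar σ α t - e‖)
  · have hmem : Set.Ioi (0:ℝ) ∈ nhdsWithin s {s}ᶜ :=
      nhdsWithin_le_nhds (Ioi_mem_nhds hs)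
    filter_upwards [hmem, self_mem_nhdsWithin] with t ht hts
    simp only [Set.mem_Ioi] at ht
    simp only [Set.mem_compl_iff, Set.mem_singleton_iff] at hts
    obtain ⟨⟨ht0, htα⟩, _⟩ := epsStar_spec hσ hα (α := α) ht
    set et := epsStar σ α t with het
    have hA := calG_support hσ hα (α := α) hs ht.le
    have hB := calG_support hσ hα (α := α) ht hs.le
    rw [← he] at hA
    rw [← het] at hB
    have hslope : slope (calG σ α) s t = (calG σ α t - calG σ α s) / (t - s) :=
      slope_def_field _ _ _
    rw [hslope, Real.norm_eq_abs, Real.norm_eq_abs]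
    have habs1 := le_abs_self (et - e)
    have habs2 := neg_abs_le (et - e)
    rcases lt_or_gt_of_ne hts with h | h
    · -- t < s
      have hd : t - s < 0 := by linarith
      have hs1 : (calG σ α t - calG σ α s) / (t - s) ≤ -e := by
        rw [div_le_iff_of_neg hd]
        nlinarith
      have hs2 : -et ≤ (calG σ α t - calG σ α s) / (t - s) := by
        rw [le_div_iff_of_neg hd]
        nlinarith
      rw [abs_le]
      constructor <;> linarith
    · -- s < t
      have hd : 0 < t - s := by linarith
      have hs1 : -e ≤ (calG σ α t - calG σ α s) / (t - s) := by
        rw [le_div_iff₀ hd]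
        nlinarith
      have hs2 : (calG σ α t - calG σ α s) / (t - s) ≤ -et := by
        rw [div_le_iff₀ hd]
        nlinarith
      rw [abs_le]
      constructor <;> linarith
  · have h1 := (epsStar_tendsto hσ hα (α := α) hs).sub_const e
    rw [sub_self] at h1
    simpa using h1.norm

end logic2

section final
variable {σ α : ℝ}

lemma calG_deriv (hσ : 0 < σ) (hα : 0 < α) {s : ℝ} (hs : 0 < s) :
    deriv (calG σ α) s = -(epsStar σ α s) :=
  (calG_hasDerivAt hσ hα hs).deriv

lemma bullet3 (hσ : 0 < σ) (hα : 0 < α) {s : ℝ} (hs : 0 < s) :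
    deriv (calG σ α) s ∈ Set.Ioo (-α) 0 := by
  rw [calG_deriv hσ hα hs]
  obtain ⟨⟨he0, heα⟩, _⟩ := epsStar_spec hσ hα (α := α) hs
  exact ⟨by linarith, by linarith⟩

lemma epsStar_small (hσ : 0 < σ) (hα : 0 < α) {δ s : ℝ} (hδ : 0 < δ) (hδα : δ < α)
    (hs : Hfun σ α δ < s) (hspos : 0 < s) : epsStar σ α s < δ := by
  obtain ⟨⟨he0, heα⟩, heH⟩ := epsStar_spec hσ hα (α := α) hspos
  by_contra h
  push_neg at h
  have := Hfun_anti hσ hα hδ h heα.le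
  rw [heH] at this
  linarith

lemma bullet4 (hσ : 0 < σ) (hα : 0 < α) :
    Filter.Tendsto (deriv (calG σ α)) Filter.atTop (nhds 0) := by
  rw [Metric.tendsto_atTop]
  intro δ hδ
  set δ' : ℝ := min (δ/2) (α/2) with hδ'
  have hδ'pos : 0 < δ' := lt_min (by linarith) (by linarith)
  have hδ'α : δ' < α := lt_of_le_of_lt (min_le_right _ _) (by linarith)
  refine ⟨max 1 (Hfun σ α δ' + 1), fun s hsN => ?_⟩
  have hs1 : (1:ℝ) ≤ s := le_trans (le_max_left _ _) hsN
  have hs2 : Hfun σ α δ' < s := by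
    have := le_trans (le_max_right _ _) hsN
    linarith
  have hspos : 0 < s := by linarith
  have hsmall := epsStar_small hσ hα hδ'pos hδ'α hs2 hspos
  obtain ⟨⟨he0, _⟩, _⟩ := epsStar_spec hσ hα (α := α) hspos
  rw [calG_deriv hσ hα hspos, Real.dist_eq]
  rw [abs_of_nonpos (by linarith), sub_zero]
  have : δ' ≤ δ/2 := min_le_left _ _
  linarith

lemma bullet5 (hσ : 0 < σ) (hα : 0 < α) {s : ℝ} (hs : 0 < s) : calG σ α s < 0 := by
  rw [calG_rep hσ hα hs, psi]
  obtain ⟨⟨he0, _⟩, _⟩ := epsStar_spec hσ hα (α := α) hs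
  have h1 := Gfun_nonneg (α := α) hσ (epsStar σ α s)
  nlinarith

lemma bullet6 (hσ : 0 < σ) (hα : 0 < α) :
    Filter.Tendsto (calG σ α) Filter.atTop Filter.atBot := by
  rw [Filter.tendsto_atBot]
  intro M
  rw [Filter.eventually_atTop]
  obtain ⟨δG, hδGpos, hδG⟩ := Gfun_blowup (α := α) hσ hα (-M)
  set δ' : ℝ := min δG (α/2) with hδ'
  have hδ'pos : 0 < δ' := lt_min hδGpos (by linarith)
  have hδ'α : δ' < α := lt_of_le_of_lt (min_le_right _ _) (by linarith)
  refine ⟨max 1 (Hfun σ α δ' + 1), fun s hsN => ?_⟩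
  have hs1 : (1:ℝ) ≤ s := le_trans (le_max_left _ _) hsN
  have hs2 : Hfun σ α δ' < s := by
    have := le_trans (le_max_right _ _) hsN
    linarith
  have hspos : 0 < s := by linarith
  have hsmall := epsStar_small hσ hα hδ'pos hδ'α hs2 hspos
  obtain ⟨⟨he0, _⟩, _⟩ := epsStar_spec hσ hα (α := α) hspos
  have hG : -M ≤ Gfun σ α (epsStar σ α s) :=
    hδG _ he0 (le_trans hsmall.le (min_le_left _ _))
  rw [calG_rep hσ hα hspos, psi]
  nlinarith

lemma bullet2 (hσ : 0 < σ) (hα : 0 < α) :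
    HasDerivWithinAt (calG σ α) (-α) (Set.Ici 0) 0 := by
  have hlow : ∀ s : ℝ, 0 ≤ s → -(α * s) ≤ calG σ α s := by
    intro s hs
    have := calG_ge (α := α) hσ hs hα
    rw [Gfun_eq_zero hσ hα le_rfl] at this
    linarith [this]
  have hup : ∀ δ : ℝ, 0 < δ → δ < α → ∀ s : ℝ, 0 < s →
      s ≤ Gfun σ α (α - δ) / α → calG σ α s ≤ -((α - δ) * s) := by
    intro δ hδ hδα s hs hsle
    rw [calG_eq_sSup]
    apply csSup_le (Sset_nonempty σ α s hα)
    rintro y ⟨ε, hε, rfl⟩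
    have hsα : α * s ≤ Gfun σ α (α - δ) := by
      rw [← le_div_iff₀' hα]
      exact hsle
    rcases le_or_gt (α - δ) ε with h | h
    · have h1 := Gfun_nonneg (α := α) hσ ε
      nlinarith
    · have h1 : Gfun σ α (α - δ) ≤ Gfun σ α ε := Gfun_anti hσ hα hε h.le
      nlinarith
  rw [hasDerivWithinAt_iff_tendsto_slope]
  rw [Set.Ici_sdiff_left]
  have hslope : ∀ s ∈ Set.Ioi (0:ℝ), slope (calG σ α) 0 s = calG σ α s / s := by
    intro s _
    rw [slope_def_field, calG_zero hσ hα, sub_zero, sub_zero]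
  apply Filter.Tendsto.congr' (Filter.eventuallyEq_of_mem self_mem_nhdsWithin
    fun s hs => (hslope s hs).symm)
  rw [tendsto_order]
  constructor
  · intro a ha
    filter_upwards [self_mem_nhdsWithin] with s hs
    simp only [Set.mem_Ioi] at hs
    have h1 := hlow s hs.le
    have h2 : -α ≤ calG σ α s / s := by
      rw [le_div_iff₀ hs]
      linarith
    linarith
  · intro b hb
    set δ : ℝ := min ((b + α)/2) (α/2) with hδdef
    have hδpos : 0 < δ := lt_min (by linarith) (by linarith)
    have hδα : δ < α := lt_of_le_of_lt (min_le_right _ _) (by linarith)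
    have hGpos : 0 < Gfun σ α (α - δ) := Gfun_pos hσ hα (by linarith) (by linarith)
    have hs0pos : 0 < Gfun σ α (α - δ) / α := by positivity
    filter_upwards [Ioo_mem_nhdsGT_of_mem (show (0:ℝ) ∈ Set.Ico 0 (Gfun σ α (α - δ) / α)
      from ⟨le_rfl, hs0pos⟩)] with s hs
    obtain ⟨hs1, hs2⟩ := hs
    have h1 := hup δ hδpos hδα s hs1 hs2.le
    have h2 : calG σ α s / s ≤ -(α - δ) := by
      rw [div_le_iff₀ hs1]
      linarith
    have h3 : δ ≤ (b + α)/2 := min_le_left _ _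
    linarith

end final


/-- Properties of `𝒢`: `𝒢(0) = 0`, right derivative `−α` at `0`,
`𝒢'(s) ∈ (−α,0)` for `s > 0`, `𝒢'(s) → 0` as `s → ∞`, `𝒢 < 0` on `(0,∞)`,
and `𝒢(s) → −∞` as `s → ∞`. -/
theorem stmt_14 (σ α : ℝ) (hσ : σ ∈ Set.Ioo (0:ℝ) (3/2)) (hα : 0 < α) :
    calG σ α 0 = 0 ∧
    HasDerivWithinAt (calG σ α) (-α) (Set.Ici 0) 0 ∧
    (∀ s : ℝ, 0 < s → deriv (calG σ α) s ∈ Set.Ioo (-α) 0) ∧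
    Filter.Tendsto (deriv (calG σ α)) Filter.atTop (nhds 0) ∧
    (∀ s : ℝ, 0 < s → calG σ α s < 0) ∧
    Filter.Tendsto (calG σ α) Filter.atTop Filter.atBot := by
  obtain ⟨hσ0, _⟩ := hσ
  exact ⟨calG_zero hσ0 hα, bullet2 hσ0 hα, fun s hs => bullet3 hσ0 hα hs,
    bullet4 hσ0 hα, fun s hs => bullet5 hσ0 hα hs, bullet6 hσ0 hα⟩
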